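/- The function t ↦ (λ_d/(λ_d+λ_c))·( t − (1 − e^{−(λ_d+λ_c)t})/(λ_c+λ_d) ) is the unique continuous solution M_↓ of the convolution system M_↑(t) = t e^{−λ_c t} + ∫₀^t λ_c e^{−λ_c x}(x + M_↓(t−x))dx, M_↓(t) = ∫₀^t λ_d e^{−λ_d x} M_↑(t−x)dx, among continuous functions of at most linear growth. -/

import Mathlib

open Real MeasureTheory intervalIntegral

lemma conv_exp_aux (c d A B k : ℝ) (hc : c ≠ 0) (hd : d ≠ 0) (t : ℝ) :
    ∫ x in (0:ℝ)..t, (Real.exp (c*x) * (A + B*x) + k * Real.exp (d*x)) =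
      (Real.exp (c*t) * (A + B*t - B/c) - (A - B/c))/c + k*(Real.exp (d*t) - 1)/d := by
  have hder : ∀ x ∈ Set.uIcc (0:ℝ) t,
      HasDerivAt (fun x => Real.exp (c*x) * (A + B*x - B/c)/c + k * Real.exp (d*x)/d)
        (Real.exp (c*x) * (A + B*x) + k * Real.exp (d*x)) x := by
    intro x _
    have h1 : HasDerivAt (fun x : ℝ => Real.exp (c*x)) (c * Real.exp (c*x)) x := by
      simpa [mul_comm] using ((hasDerivAt_id x).const_mul c).exp
    have h2 : HasDerivAt (fun x : ℝ => Real.exp (d*x)) (d * Real.exp (d*x)) x := by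
      simpa [mul_comm] using ((hasDerivAt_id x).const_mul d).exp
    have h3 : HasDerivAt (fun x : ℝ => A + B*x - B/c) B x := by
      simpa using (((hasDerivAt_id x).const_mul B).const_add A).sub_const (B/c)
    have := (((h1.mul h3).div_const c).add ((h2.const_mul k).div_const d))
    refine HasDerivAt.congr_deriv this ?_
    field_simp
    ring
  rw [intervalIntegral.integral_eq_sub_of_hasDerivAt hder
    (Continuous.intervalIntegrable (by fun_prop) 0 t)]
  field_simp
  simp only [mul_zero, Real.exp_zero]
  ring

lemma E1_aux (lc ld : ℝ) (hlc : 0 < lc) (hld : 0 < ld) (t : ℝ) :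
    (∫ x in (0:ℝ)..t, lc * Real.exp (-lc*x) *
        (x + (ld/(ld+lc)) * ((t-x) - (1 - Real.exp (-(ld+lc)*(t-x)))/(lc+ld)))) =
      ld/(ld+lc)*t + lc/(ld+lc)^2*(1 - Real.exp (-(ld+lc)*t)) - t*Real.exp (-lc*t) := by
  have hs : ld + lc ≠ 0 := by positivity
  have hs' : lc + ld ≠ 0 := by positivity
  have hrw : (∫ x in (0:ℝ)..t, lc * Real.exp (-lc*x) *
        (x + (ld/(ld+lc)) * ((t-x) - (1 - Real.exp (-(ld+lc)*(t-x)))/(lc+ld)))) =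
      ∫ x in (0:ℝ)..t, (Real.exp (-lc*x) *
          ((lc*((ld/(ld+lc))*t - (ld/(ld+lc))/(lc+ld))) + (lc*(1 - ld/(ld+lc)))*x)
        + (lc*((ld/(ld+lc))/(lc+ld))*Real.exp (-(ld+lc)*t)) * Real.exp (ld*x)) := by
    apply intervalIntegral.integral_congr
    intro x _
    dsimp only
    have k2 : Real.exp (-(ld+lc)*(t-x)) = Real.exp (-(ld+lc)*t) * Real.exp ((ld+lc)*x) := by
      rw [← Real.exp_add]; ring_nf
    have k3 : Real.exp (-lc*x) * Real.exp ((ld+lc)*x) = Real.exp (ld*x) := by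
      rw [← Real.exp_add]; ring_nf
    rw [k2, ← k3]
    field_simp
    ring
  rw [hrw, conv_exp_aux (-lc) ld _ _ _ (neg_ne_zero.mpr hlc.ne') hld.ne' t]
  have keyT : Real.exp (-lc*t) = Real.exp (-(ld+lc)*t) * Real.exp (ld*t) := by
    rw [← Real.exp_add]; ring_nf
  rw [keyT]
  field_simp
  ring

lemma E2_aux (lc ld : ℝ) (hlc : 0 < lc) (hld : 0 < ld) (t : ℝ) :
    (∫ x in (0:ℝ)..t, ld * Real.exp (-ld*x) *
        ((ld/(ld+lc))*(t-x) + lc/(ld+lc)^2*(1 - Real.exp (-(ld+lc)*(t-x))))) =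
      (ld/(ld+lc)) * (t - (1 - Real.exp (-(ld+lc)*t))/(lc+ld)) := by
  have hs : ld + lc ≠ 0 := by positivity
  have hs' : lc + ld ≠ 0 := by positivity
  have hrw : (∫ x in (0:ℝ)..t, ld * Real.exp (-ld*x) *
        ((ld/(ld+lc))*(t-x) + lc/(ld+lc)^2*(1 - Real.exp (-(ld+lc)*(t-x))))) =
      ∫ x in (0:ℝ)..t, (Real.exp (-ld*x) *
          ((ld*((ld/(ld+lc))*t + lc/(ld+lc)^2)) + (-(ld*(ld/(ld+lc))))*x)
        + (-(ld*(lc/(ld+lc)^2)*Real.exp (-(ld+lc)*t))) * Real.exp (lc*x)) := by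
    apply intervalIntegral.integral_congr
    intro x _
    dsimp only
    have k2 : Real.exp (-(ld+lc)*(t-x)) = Real.exp (-(ld+lc)*t) * Real.exp ((ld+lc)*x) := by
      rw [← Real.exp_add]; ring_nf
    have k3 : Real.exp (-ld*x) * Real.exp ((ld+lc)*x) = Real.exp (lc*x) := by
      rw [← Real.exp_add]; ring_nf
    rw [k2, ← k3]
    field_simp
    ring
  rw [hrw, conv_exp_aux (-ld) lc _ _ _ (neg_ne_zero.mpr hld.ne') hlc.ne' t]
  have keyT : Real.exp (-ld*t) = Real.exp (-(ld+lc)*t) * Real.exp (lc*t) := by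
    rw [← Real.exp_add]; ring_nf
  rw [keyT]
  field_simp
  ring

lemma convShift_aux (c : ℝ) (D : ℝ → ℝ) (r : ℝ) :
    (∫ x in (0:ℝ)..r, c * Real.exp (-c*x) * D (r-x)) =
      c * Real.exp (-c*r) * ∫ u in (0:ℝ)..r, Real.exp (c*u) * D u := by
  have h1 : (∫ x in (0:ℝ)..r, c * Real.exp (-c*x) * D (r-x)) =
      ∫ x in (0:ℝ)..r, (fun u => c * Real.exp (-c*(r-u)) * D u) (r - x) := by
    apply intervalIntegral.integral_congr
    intro x _
    simp [sub_sub_cancel]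
  rw [h1, intervalIntegral.integral_comp_sub_left (fun u => c * Real.exp (-c*(r-u)) * D u) r]
  simp only [sub_self, sub_zero]
  rw [← intervalIntegral.integral_const_mul]
  apply intervalIntegral.integral_congr
  intro u _
  dsimp only
  have : Real.exp (-c*(r-u)) = Real.exp (-c*r) * Real.exp (c*u) := by
    rw [← Real.exp_add]; ring_nf
  rw [this]; ring

theorem stmt_12 (lc ld : ℝ) (hlc : 0 < lc) (hld : 0 < ld)
    (M : ℝ → ℝ)
    (hM : ∀ t, M t = (ld / (ld + lc)) * (t - (1 - Real.exp (-(ld + lc) * t)) / (lc + ld))) :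
    -- M is part of a continuous solution pair of at most linear growth
    (∃ Mup : ℝ → ℝ, ContinuousOn Mup (Set.Ici 0) ∧
      (∃ C > (0 : ℝ), ∀ t ≥ (0 : ℝ), |Mup t| ≤ C * (1 + t)) ∧
      (∀ t ≥ (0 : ℝ),
        Mup t = t * Real.exp (-lc * t) +
          ∫ x in (0 : ℝ)..t, lc * Real.exp (-lc * x) * (x + M (t - x))) ∧
      (∀ t ≥ (0 : ℝ),
        M t = ∫ x in (0 : ℝ)..t, ld * Real.exp (-ld * x) * Mup (t - x))) ∧
    -- uniqueness: any continuous solution pair of at most linear growth has the same M↓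
    (∀ Ndown Nup : ℝ → ℝ,
      ContinuousOn Ndown (Set.Ici 0) → ContinuousOn Nup (Set.Ici 0) →
      (∃ C > (0 : ℝ), ∀ t ≥ (0 : ℝ), |Ndown t| ≤ C * (1 + t)) →
      (∃ C > (0 : ℝ), ∀ t ≥ (0 : ℝ), |Nup t| ≤ C * (1 + t)) →
      (∀ t ≥ (0 : ℝ),
        Nup t = t * Real.exp (-lc * t) +
          ∫ x in (0 : ℝ)..t, lc * Real.exp (-lc * x) * (x + Ndown (t - x))) →
      (∀ t ≥ (0 : ℝ),
        Ndown t = ∫ x in (0 : ℝ)..t, ld * Real.exp (-ld * x) * Nup (t - x)) →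
      ∀ t ≥ (0 : ℝ), Ndown t = M t) := by
  set Mupf : ℝ → ℝ := fun t => ld/(ld+lc)*t + lc/(ld+lc)^2*(1 - Real.exp (-(ld+lc)*t))
    with hMupf
  have hMc : Continuous M := by
    have h : M = fun t => (ld / (ld + lc)) * (t - (1 - Real.exp (-(ld + lc) * t)) / (lc + ld)) :=
      funext hM
    rw [h]; fun_prop
  -- existence equations for the closed-form pair
  have heq1 : ∀ t : ℝ, Mupf t = t * Real.exp (-lc * t) +
      ∫ x in (0 : ℝ)..t, lc * Real.exp (-lc * x) * (x + M (t - x)) := by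
    intro t
    simp only [hM]
    rw [E1_aux lc ld hlc hld t, hMupf]
    ring
  have heq2 : ∀ t : ℝ, M t = ∫ x in (0 : ℝ)..t, ld * Real.exp (-ld * x) * Mupf (t - x) := by
    intro t
    rw [hM t, ← E2_aux lc ld hlc hld t]
  refine ⟨⟨Mupf, by fun_prop, ⟨1 + lc/(ld+lc)^2, by positivity, ?_⟩,
      fun t _ => heq1 t, fun t _ => heq2 t⟩, ?_⟩
  · -- linear growth
    intro t ht
    have h1 : ld/(ld+lc) ≤ 1 := by
      rw [div_le_one (by positivity)]; linarith
    have h2 : (0:ℝ) ≤ ld/(ld+lc) := by positivity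
    have h3 : (0:ℝ) ≤ lc/(ld+lc)^2 := by positivity
    have h4 : Real.exp (-(ld+lc)*t) ≤ 1 := by
      rw [Real.exp_le_one_iff]; nlinarith
    have h5 : 0 < Real.exp (-(ld+lc)*t) := Real.exp_pos _
    rw [hMupf, abs_le]
    constructor <;> nlinarith
  · -- uniqueness
    intro Ndown Nup hcD hcU _ _ hEqUp hEqDown t₀ ht₀
    set Dc : ℝ → ℝ := fun u => Ndown (max u 0) - M u with hDcdef
    set Uc : ℝ → ℝ := fun u => Nup (max u 0) - Mupf u with hUcdef
    have hNdc : Continuous fun u : ℝ => Ndown (max u 0) :=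
      hcD.comp_continuous (continuous_id.max continuous_const) fun x => le_max_right x 0
    have hNuc : Continuous fun u : ℝ => Nup (max u 0) :=
      hcU.comp_continuous (continuous_id.max continuous_const) fun x => le_max_right x 0
    have hDcont : Continuous Dc := hNdc.sub hMc
    have hUcont : Continuous Uc := hNuc.sub (by fun_prop)
    set P : ℝ → ℝ := fun r => ∫ u in (0:ℝ)..r, Real.exp (lc*u) * Dc u with hPdef
    set Q : ℝ → ℝ := fun r => ∫ u in (0:ℝ)..r, Real.exp (ld*u) * Uc u with hQdef
    -- claim A
    have claimA : ∀ r ≥ (0:ℝ), Uc r = lc * Real.exp (-lc*r) * P r := by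
      intro r hr
      have hint1 : IntervalIntegrable
          (fun x => lc * Real.exp (-lc * x) * (x + Ndown (max (r-x) 0))) volume 0 r := by
        apply Continuous.intervalIntegrable
        have h : Continuous fun x : ℝ => Ndown (max (r-x) 0) :=
          hcD.comp_continuous (by fun_prop) fun x => Set.mem_Ici.2 (le_max_right _ 0)
        exact (by fun_prop : Continuous fun x : ℝ => lc * Real.exp (-lc * x)).mul
          (continuous_id.add h)
      have hint2 : IntervalIntegrable
          (fun x => lc * Real.exp (-lc * x) * (x + M (r-x))) volume 0 r := by
        apply Continuous.intervalIntegrable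
        exact (by fun_prop : Continuous fun x : ℝ => lc * Real.exp (-lc * x)).mul
          (continuous_id.add (hMc.comp (by fun_prop)))
      have hNup : Nup r = r * Real.exp (-lc * r) +
          ∫ x in (0:ℝ)..r, lc * Real.exp (-lc * x) * (x + Ndown (max (r-x) 0)) := by
        rw [hEqUp r hr]
        congr 1
        apply intervalIntegral.integral_congr
        intro x hx
        rw [Set.uIcc_of_le hr] at hx
        obtain ⟨h1, h2⟩ := hx
        dsimp only
        rw [max_eq_left (by linarith : (0:ℝ) ≤ r - x)]
      have hUr : Uc r = (∫ x in (0:ℝ)..r, lc * Real.exp (-lc * x) * (x + Ndown (max (r-x) 0)))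
          - ∫ x in (0:ℝ)..r, lc * Real.exp (-lc * x) * (x + M (r-x)) := by
        rw [hUcdef]
        dsimp only
        rw [max_eq_left hr, hNup, heq1 r]
        ring
      rw [hUr, ← intervalIntegral.integral_sub hint1 hint2]
      rw [show (lc * Real.exp (-lc*r) * P r) =
          ∫ x in (0:ℝ)..r, lc * Real.exp (-lc*x) * Dc (r-x) from
        (convShift_aux lc Dc r).symm]
      apply intervalIntegral.integral_congr
      intro x _
      simp only [hDcdef]
      ring
    -- claim B
    have claimB : ∀ r ≥ (0:ℝ), Dc r = ld * Real.exp (-ld*r) * Q r := by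
      intro r hr
      have hint1 : IntervalIntegrable
          (fun x => ld * Real.exp (-ld * x) * Nup (max (r-x) 0)) volume 0 r := by
        apply Continuous.intervalIntegrable
        have h : Continuous fun x : ℝ => Nup (max (r-x) 0) :=
          hcU.comp_continuous (by fun_prop) fun x => Set.mem_Ici.2 (le_max_right _ 0)
        exact (by fun_prop : Continuous fun x : ℝ => ld * Real.exp (-ld * x)).mul h
      have hint2 : IntervalIntegrable
          (fun x => ld * Real.exp (-ld * x) * Mupf (r-x)) volume 0 r := by
        apply Continuous.intervalIntegrable
        fun_prop
      have hNdown : Ndown r = ∫ x in (0:ℝ)..r, ld * Real.exp (-ld * x) * Nup (max (r-x) 0) := by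
        rw [hEqDown r hr]
        apply intervalIntegral.integral_congr
        intro x hx
        rw [Set.uIcc_of_le hr] at hx
        obtain ⟨h1, h2⟩ := hx
        dsimp only
        rw [max_eq_left (by linarith : (0:ℝ) ≤ r - x)]
      have hDr : Dc r = (∫ x in (0:ℝ)..r, ld * Real.exp (-ld * x) * Nup (max (r-x) 0))
          - ∫ x in (0:ℝ)..r, ld * Real.exp (-ld * x) * Mupf (r-x) := by
        rw [hDcdef]
        dsimp only
        rw [max_eq_left hr, hNdown, heq2 r]
      rw [hDr, ← intervalIntegral.integral_sub hint1 hint2]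
      rw [show (ld * Real.exp (-ld*r) * Q r) =
          ∫ x in (0:ℝ)..r, ld * Real.exp (-ld*x) * Uc (r-x) from
        (convShift_aux ld Uc r).symm]
      apply intervalIntegral.integral_congr
      intro x _
      simp only [hUcdef]
      ring
    -- Gronwall
    have hgc : Continuous fun u => Real.exp (lc*u) * Dc u := by fun_prop
    have hgd : Continuous fun u => Real.exp (ld*u) * Uc u := by fun_prop
    have hP : ∀ r : ℝ, HasDerivAt P (Real.exp (lc*r) * Dc r) r := fun r =>
      intervalIntegral.integral_hasDerivAt_right (hgc.intervalIntegrable 0 r)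
        (hgc.stronglyMeasurableAtFilter _ _) hgc.continuousAt
    have hQ : ∀ r : ℝ, HasDerivAt Q (Real.exp (ld*r) * Uc r) r := fun r =>
      intervalIntegral.integral_hasDerivAt_right (hgd.intervalIntegrable 0 r)
        (hgd.stronglyMeasurableAtFilter _ _) hgd.continuousAt
    set f : ℝ → ℝ × ℝ := fun r => (P r, Q r) with hfdef
    set K : ℝ := (lc + ld) * Real.exp ((lc + ld) * t₀) with hK
    have hfc : ContinuousOn f (Set.Icc 0 t₀) :=
      (((continuous_iff_continuousAt.2 fun r => (hP r).continuousAt).prodMk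
        (continuous_iff_continuousAt.2 fun r => (hQ r).continuousAt))).continuousOn
    have hbound : ∀ x ∈ Set.Ico (0:ℝ) t₀,
        ‖(Real.exp (lc*x) * Dc x, Real.exp (ld*x) * Uc x)‖ ≤ K * ‖f x‖ + 0 := by
      intro x hx
      obtain ⟨hx0, hx1⟩ := hx
      have hPQ : ‖f x‖ = max |P x| |Q x| := by
        rw [hfdef]; simp [Prod.norm_def, Real.norm_eq_abs]
      have hDx := claimB x hx0
      have hUx := claimA x hx0
      have hb1 : |Real.exp (lc*x) * Dc x| ≤ K * ‖f x‖ := by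
        rw [hDx, show Real.exp (lc*x) * (ld * Real.exp (-ld*x) * Q x) =
            (ld * (Real.exp (lc*x) * Real.exp (-ld*x))) * Q x from by ring, abs_mul]
        have he : Real.exp (lc*x) * Real.exp (-ld*x) = Real.exp (lc*x + -ld*x) :=
          (Real.exp_add _ _).symm
        have hcoef : |ld * (Real.exp (lc*x) * Real.exp (-ld*x))| ≤ K := by
          rw [abs_of_pos (by positivity), he, hK]
          have h5 : Real.exp (lc*x + -ld*x) ≤ Real.exp ((lc+ld)*t₀) := by
            apply Real.exp_le_exp.2; nlinarith
          nlinarith [Real.exp_pos (lc*x + -ld*x)]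
        have hq : |Q x| ≤ ‖f x‖ := hPQ ▸ le_max_right _ _
        exact mul_le_mul hcoef hq (abs_nonneg _) (le_trans (abs_nonneg _) hcoef)
      have hb2 : |Real.exp (ld*x) * Uc x| ≤ K * ‖f x‖ := by
        rw [hUx, show Real.exp (ld*x) * (lc * Real.exp (-lc*x) * P x) =
            (lc * (Real.exp (ld*x) * Real.exp (-lc*x))) * P x from by ring, abs_mul]
        have he : Real.exp (ld*x) * Real.exp (-lc*x) = Real.exp (ld*x + -lc*x) :=
          (Real.exp_add _ _).symm
        have hcoef : |lc * (Real.exp (ld*x) * Real.exp (-lc*x))| ≤ K := by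
          rw [abs_of_pos (by positivity), he, hK]
          have h5 : Real.exp (ld*x + -lc*x) ≤ Real.exp ((lc+ld)*t₀) := by
            apply Real.exp_le_exp.2; nlinarith
          nlinarith [Real.exp_pos (ld*x + -lc*x)]
        have hp : |P x| ≤ ‖f x‖ := hPQ ▸ le_max_left _ _
        exact mul_le_mul hcoef hp (abs_nonneg _) (le_trans (abs_nonneg _) hcoef)
      rw [add_zero, Prod.norm_def]
      simp only [Real.norm_eq_abs]
      exact max_le hb1 hb2
    have hf0 : ‖f 0‖ ≤ 0 := by
      rw [hfdef]
      simp [hPdef, hQdef, intervalIntegral.integral_same, Prod.norm_def]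
    have hgron := norm_le_gronwallBound_of_norm_deriv_right_le hfc
      (fun x _ => ((hP x).prodMk (hQ x)).hasDerivWithinAt) hf0 hbound t₀
      (Set.right_mem_Icc.2 ht₀)
    rw [gronwallBound_ε0, sub_zero] at hgron
    simp only [zero_mul] at hgron
    have hfz : ‖f t₀‖ = 0 := le_antisymm hgron (norm_nonneg _)
    have hQz : Q t₀ = 0 := by
      have h : |Q t₀| ≤ ‖f t₀‖ := by
        rw [hfdef]
        simp only [Prod.norm_def, Real.norm_eq_abs]
        exact le_max_right _ _
      rw [hfz] at h
      exact abs_eq_zero.1 (le_antisymm h (abs_nonneg _))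
    have hDz : Dc t₀ = 0 := by rw [claimB t₀ ht₀, hQz]; ring
    have hfin : Ndown (max t₀ 0) - M t₀ = 0 := hDz
    rwa [max_eq_left ht₀, sub_eq_zero] at hfin
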